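/- Let (Λⱼ)_{j≥1} be a nonincreasing sequence of positive reals and (cⱼ)_{j≥1} nonnegative reals with cⱼ ≤ Λⱼ for all j and ∑ⱼ cⱼ/Λⱼ ≤ m for a positive integer m. Then ∑ⱼ cⱼ ≤ ∑_{j=1}^{m} Λⱼ. -/

import Mathlib

/-- Water-filling lemma: if `Λ` is a nonincreasing sequence of positive reals,
`0 ≤ cⱼ ≤ Λⱼ` for all `j`, and `∑ⱼ cⱼ/Λⱼ ≤ m`, then `∑ⱼ cⱼ ≤ ∑_{j=1}^m Λⱼ`. -/
theorem stmt_10 (Λ c : ℕ → ℝ) (hanti : Antitone Λ) (hpos : ∀ j, 0 < Λ j)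
    (hc : ∀ j, 0 ≤ c j ∧ c j ≤ Λ j)
    (hsumc : Summable c) (hsumratio : Summable fun j => c j / Λ j)
    (m : ℕ) (hm : 1 ≤ m) (hratio : ∑' j, c j / Λ j ≤ (m : ℝ)) :
    ∑' j, c j ≤ ∑ j ∈ Finset.range m, Λ j := by
  set L := Λ (m - 1) with hL
  have hLpos : 0 < L := hpos _
  -- split sums at m
  have hsplit_c := Summable.sum_add_tsum_nat_add m hsumc
  have hsplit_r := Summable.sum_add_tsum_nat_add m hsumratio
  have hsum_tail_c : Summable fun j => c (j + m) := (summable_nat_add_iff m).2 hsumc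
  have hsum_tail_r : Summable fun j => c (j + m) / Λ (j + m) :=
    (summable_nat_add_iff m).2 hsumratio
  -- tail bound: c (j+m) ≤ L * (c (j+m) / Λ (j+m))
  have htail : ∑' j, c (j + m) ≤ L * ∑' j, c (j + m) / Λ (j + m) := by
    rw [← tsum_mul_left]
    refine Summable.tsum_le_tsum (fun j => ?_) hsum_tail_c (hsum_tail_r.mul_left L)
    have hΛ : Λ (j + m) ≤ L := hanti (by omega)
    have h1 : c (j + m) = (c (j + m) / Λ (j + m)) * Λ (j + m) :=
      (div_mul_cancel₀ _ (hpos _).ne').symm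
    have hrnn : 0 ≤ c (j + m) / Λ (j + m) :=
      div_nonneg (hc _).1 (hpos _).le
    calc c (j + m) = (c (j + m) / Λ (j + m)) * Λ (j + m) := h1
      _ ≤ (c (j + m) / Λ (j + m)) * L := by
          exact mul_le_mul_of_nonneg_left hΛ hrnn
      _ = L * (c (j + m) / Λ (j + m)) := mul_comm _ _
  have hr2 : ∑' j, c (j + m) / Λ (j + m) ≤ (m : ℝ) - ∑ j ∈ Finset.range m, c j / Λ j := by
    linarith [hsplit_r, hratio]
  have hstep : L * ∑' j, c (j + m) / Λ (j + m) ≤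
      ∑ j ∈ Finset.range m, (Λ j - c j) := by
    calc L * ∑' j, c (j + m) / Λ (j + m)
        ≤ L * ((m : ℝ) - ∑ j ∈ Finset.range m, c j / Λ j) :=
          mul_le_mul_of_nonneg_left hr2 hLpos.le
      _ = ∑ j ∈ Finset.range m, L * (1 - c j / Λ j) := by
          rw [eq_comm]
          simp only [mul_sub, mul_one]
          rw [Finset.sum_sub_distrib, Finset.sum_const, Finset.card_range,
            nsmul_eq_mul, ← Finset.mul_sum]
          ring
      _ ≤ ∑ j ∈ Finset.range m, (Λ j - c j) := by
          refine Finset.sum_le_sum fun j hj => ?_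
          have hj' : j < m := Finset.mem_range.mp hj
          have hLj : L ≤ Λ j := hanti (by omega)
          have hfac : 0 ≤ 1 - c j / Λ j := by
            have := (div_le_one (hpos j)).2 (hc j).2
            linarith
          have : L * (1 - c j / Λ j) ≤ Λ j * (1 - c j / Λ j) :=
            mul_le_mul_of_nonneg_right hLj hfac
          calc L * (1 - c j / Λ j) ≤ Λ j * (1 - c j / Λ j) := this
            _ = Λ j - c j := by
                rw [mul_sub, mul_one, ← mul_div_assoc,
                  mul_div_cancel_left₀ _ (hpos j).ne']
  have htailc : ∑' j, c (j + m) ≤ ∑ j ∈ Finset.range m, (Λ j - c j) :=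
    le_trans htail hstep
  have hcle : ∀ j ∈ Finset.range m, c j ≤ c j := fun _ _ => le_rfl
  have : ∑' j, c j = ∑ j ∈ Finset.range m, c j + ∑' j, c (j + m) := hsplit_c.symm
  rw [this, Finset.sum_sub_distrib] at *
  linarith [htailc]
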